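/- arXiv:2308.12803 — 6 statements merged into one kernel-verified Lean document; each statement's English description precedes it below -/
import Mathlib

section
/- The quotient group ℤ⁷ / (ℤ-span of the columns of M) is isomorphic, as an abelian group, to (ℤ/2ℤ) × ℤ. (This is the cokernel of ĥ∗ − Id on the first homology of the blown-up Arnoux–Yoccoz surface.) -/
/-- The 7×7 integer matrix representing `ĥ∗ − Id` on the first homology of the
blown-up Arnoux–Yoccoz genus-3 surface, with respect to the basis (A,B,C,D,E,F,G). -/
def AYMatrix : Matrix (Fin 7) (Fin 7) ℤ :=
  !![-1,  0,  0,  0,  1,  0,  0;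
      0, -1,  0,  0,  0,  1,  0;
      1,  0, -1,  1,  1,  0,  1;
      0,  1,  0, -1,  0,  0,  0;
      0,  0,  1,  0, -1,  0,  0;
      1,  1,  1,  2,  0, -1,  0;
      0, -1, -1,  0,  1,  1,  0]

section Helpers

variable {α : Type*}

lemma vec7_zero (a b c d e f g : α) : (![a, b, c, d, e, f, g]) 0 = a := rfl
lemma vec7_one (a b c d e f g : α) : (![a, b, c, d, e, f, g]) 1 = b := rfl
lemma vec7_two (a b c d e f g : α) : (![a, b, c, d, e, f, g]) 2 = c := rfl
lemma vec7_three (a b c d e f g : α) : (![a, b, c, d, e, f, g]) 3 = d := rfl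
lemma vec7_four (a b c d e f g : α) : (![a, b, c, d, e, f, g]) 4 = e := rfl
lemma vec7_five (a b c d e f g : α) : (![a, b, c, d, e, f, g]) 5 = f := rfl
lemma vec7_six (a b c d e f g : α) : (![a, b, c, d, e, f, g]) 6 = g := rfl

lemma vec7_eta (x : Fin 7 → α) : x = ![x 0, x 1, x 2, x 3, x 4, x 5, x 6] := by
  funext i; fin_cases i <;> rfl

end Helpers

/-- Explicit formula for `AYMatrix.mulVec` on a vector literal. -/
lemma AYmulVec (a b c d e f g : ℤ) : AYMatrix.mulVec ![a, b, c, d, e, f, g] =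
    ![-a + e, -b + f, a - c + d + e + g, b - d, c - e,
      a + b + c + 2 * d - f, -b - c + e + f] := by
  funext i
  fin_cases i <;>
    simp [AYMatrix, Matrix.cons_mulVec, Matrix.cons_dotProduct, vec7_five, vec7_six] <;> ring

/-- The surjection `ℤ⁷ → ℤ/2 × ℤ` whose kernel is the column span of `AYMatrix`. -/
def AYproj : (Fin 7 → ℤ) →ₗ[ℤ] ZMod 2 × ℤ where
  toFun x := (((x 0 - x 1 + 2 * x 2 + 3 * x 4 - x 5 : ℤ) : ZMod 2), -x 1 + x 4 + x 6)
  map_add' x y := by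
    apply Prod.ext
    · simp only [Pi.add_apply, Prod.fst_add]; push_cast; ring
    · simp only [Pi.add_apply, Prod.snd_add]; ring
  map_smul' c x := by
    apply Prod.ext
    · simp only [Pi.smul_apply, smul_eq_mul, RingHom.id_apply, Prod.smul_fst]
      rw [zsmul_eq_mul]; push_cast; ring
    · simp only [Pi.smul_apply, smul_eq_mul, RingHom.id_apply, Prod.smul_snd, smul_eq_mul]
      ring

lemma AYproj_surjective : Function.Surjective AYproj := by
  rintro ⟨a, b⟩
  refine ⟨![0, 0, 0, 0, 0, -(a.val : ℤ), b], ?_⟩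
  have h : ((a.val : ℤ) : ZMod 2) = a := by
    rw [Int.cast_natCast, ZMod.natCast_val, ZMod.cast_id]
  simp only [AYproj, LinearMap.coe_mk, AddHom.coe_mk, vec7_zero, vec7_one, vec7_two,
    vec7_three, vec7_four, vec7_five, vec7_six]
  rw [Prod.mk.injEq]
  constructor
  · rw [show (0 : ℤ) - 0 + 2 * 0 + 3 * 0 - -(a.val : ℤ) = (a.val : ℤ) by ring, h]
  · ring

lemma AYrange_eq_ker : LinearMap.range AYMatrix.mulVecLin = LinearMap.ker AYproj := by
  apply le_antisymm
  · rintro _ ⟨v, rfl⟩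
    rw [LinearMap.mem_ker, Matrix.mulVecLin_apply, vec7_eta v, AYmulVec]
    simp only [AYproj, LinearMap.coe_mk, AddHom.coe_mk, vec7_zero, vec7_one, vec7_two,
      vec7_three, vec7_four, vec7_five, vec7_six]
    refine Prod.ext ?_ ?_
    · simp only [Prod.fst_zero]
      exact (ZMod.intCast_zmod_eq_zero_iff_dvd _ 2).mpr ⟨v 6, by ring⟩
    · simp only [Prod.snd_zero]
      ring
  · intro x hx
    rw [LinearMap.mem_ker] at hx
    have h1 : ((x 0 - x 1 + 2 * x 2 + 3 * x 4 - x 5 : ℤ) : ZMod 2) = 0 :=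
      congrArg Prod.fst hx
    have h2 : -x 1 + x 4 + x 6 = 0 := congrArg Prod.snd hx
    obtain ⟨k, hk⟩ := (ZMod.intCast_zmod_eq_zero_iff_dvd _ 2).mp h1
    refine ⟨![x 1 + x 2 + x 3 + x 4 - k, -x 1, x 0 + x 1 + x 2 + x 3 + 2 * x 4 - k,
      -x 1 - x 3, x 0 + x 1 + x 2 + x 3 + x 4 - k, 0, k], ?_⟩
    rw [Matrix.mulVecLin_apply, AYmulVec]
    push_cast at hk
    conv_rhs => rw [vec7_eta x]
    simp only [Matrix.vecCons, Fin.cons_inj]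
    refine ⟨by linarith, by linarith, by linarith, by linarith, by linarith, by linarith,
      by linarith, trivial⟩

/-- The cokernel `ℤ⁷ / im(ĥ∗ − Id)` is isomorphic to `ℤ/2ℤ × ℤ`. -/
theorem cokernel_iso_zmod2_prod_int :
    Nonempty (((Fin 7 → ℤ) ⧸ LinearMap.range AYMatrix.mulVecLin) ≃+ (ZMod 2 × ℤ)) := by
  exact ⟨((Submodule.quotEquivOfEq _ _ AYrange_eq_ker).trans
    (AYproj.quotKerEquivOfSurjective AYproj_surjective)).toAddEquiv⟩
end

section
/- There exist matrices U, V in GL₇(ℤ) such that U·M·V is the diagonal matrix diag(1,1,1,1,1,2,0); that is, the Smith normal form of M over ℤ is diag(1,1,1,1,1,2,0). -/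
def UmatAY : Matrix (Fin 7) (Fin 7) ℤ :=
  !![-1, 0, 0, 0, 0, 0, 0;
      0, -1, 0, 0, 0, 0, 0;
     -1, 0, -1, 0, 0, 0, 0;
      0, -1, 0, -1, 0, 0, 0;
      1, 1, 1, 1, 1, 0, 0;
      1, -1, 2, 0, 3, -1, 0;
      0, -1, 0, 0, 1, 0, 1]

def UinvAY : Matrix (Fin 7) (Fin 7) ℤ :=
  !![-1, 0, 0, 0, 0, 0, 0;
      0, -1, 0, 0, 0, 0, 0;
      1, 0, -1, 0, 0, 0, 0;
      0, 1, 0, -1, 0, 0, 0;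
      0, 0, 1, 1, 1, 0, 0;
      1, 1, 1, 3, 3, -1, 0;
      0, -1, -1, -1, -1, 0, 1]

def VmatAY : Matrix (Fin 7) (Fin 7) ℤ :=
  !![1, 0, 0, 0, 1, -1, -1;
     0, 1, 0, 0, 0, 0, 1;
     0, 0, 1, 1, 2, -1, -1;
     0, 0, 0, 1, 0, 0, 1;
     0, 0, 0, 0, 1, -1, -1;
     0, 0, 0, 0, 0, 0, 1;
     0, 0, 0, 0, 0, 1, 0]

def VinvAY : Matrix (Fin 7) (Fin 7) ℤ :=
  !![1, 0, 0, 0, -1, 0, 0;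
     0, 1, 0, 0, 0, -1, 0;
     0, 0, 1, -1, -2, 0, -1;
     0, 0, 0, 1, 0, -1, 0;
     0, 0, 0, 0, 1, 1, 1;
     0, 0, 0, 0, 0, 0, 1;
     0, 0, 0, 0, 0, 1, 0]

def WmatAY : Matrix (Fin 7) (Fin 7) ℤ :=
  !![1, 0, 0, 0, -1, 0, 0;
     0, 1, 0, 0, 0, -1, 0;
     0, 0, 1, -1, -2, 0, -1;
     0, 0, 0, 1, 0, -1, 0;
     0, 0, 0, 0, 1, 1, 1;
     0, 0, 0, 0, 0, 0, 2;
     0, 0, 0, 0, 0, 0, 0]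

set_option maxHeartbeats 1000000 in
lemma UmatAY_mul_inv : UmatAY * UinvAY = 1 := by
  ext i j
  fin_cases i <;> fin_cases j <;>
    simp [UmatAY, UinvAY, Matrix.mul_apply, Fin.sum_univ_succ, Matrix.cons_val_zero,
      Matrix.cons_val_succ, Matrix.one_apply] <;> decide

set_option maxHeartbeats 1000000 in
lemma VmatAY_mul_inv : VmatAY * VinvAY = 1 := by
  ext i j
  fin_cases i <;> fin_cases j <;>
    simp [VmatAY, VinvAY, Matrix.mul_apply, Fin.sum_univ_succ, Matrix.cons_val_zero,
      Matrix.cons_val_succ, Matrix.one_apply] <;> decide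

set_option maxHeartbeats 1000000 in
lemma UmatAY_mul_AY : UmatAY * AYMatrix = WmatAY := by
  ext i j
  fin_cases i <;> fin_cases j <;>
    simp [UmatAY, AYMatrix, WmatAY, Matrix.mul_apply, Fin.sum_univ_succ, Matrix.cons_val_zero,
      Matrix.cons_val_succ] <;> decide

set_option maxHeartbeats 1000000 in
lemma WmatAY_mul_V : WmatAY * VmatAY = Matrix.diagonal ![1, 1, 1, 1, 1, 2, 0] := by
  ext i j
  fin_cases i <;> fin_cases j <;>
    simp [WmatAY, VmatAY, Matrix.mul_apply, Fin.sum_univ_succ, Matrix.cons_val_zero,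
      Matrix.cons_val_succ, Matrix.diagonal] <;> decide

/-- The Smith normal form of `AYMatrix` over `ℤ` is `diag(1,1,1,1,1,2,0)`:
there are matrices `U, V ∈ GL₇(ℤ)` with `U * M * V` equal to this diagonal matrix. -/
theorem smith_normal_form_AYMatrix :
    ∃ U V : Matrix (Fin 7) (Fin 7) ℤ, IsUnit U.det ∧ IsUnit V.det ∧
      U * AYMatrix * V = Matrix.diagonal ![1, 1, 1, 1, 1, 2, 0] := by
  refine ⟨UmatAY, VmatAY, ?_, ?_, ?_⟩
  · exact IsUnit.of_mul_eq_one UinvAY.det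
      (by rw [← Matrix.det_mul, UmatAY_mul_inv, Matrix.det_one])
  · exact IsUnit.of_mul_eq_one VinvAY.det
      (by rw [← Matrix.det_mul, VmatAY_mul_inv, Matrix.det_one])
  · rw [UmatAY_mul_AY, WmatAY_mul_V]
end

section
/- The vector 2·e₆ lies in the ℤ-span of the columns of M, but e₆ itself does not; consequently the class of e₆ (the homology class F) has order exactly 2 in the cokernel ℤ⁷ / im(M), so it generates the torsion subgroup of the cokernel. -/
/-- The standard basis vector `e₆` of ℤ⁷, corresponding to the homology class `F`. -/
def eSix : Fin 7 → ℤ := ![0, 0, 0, 0, 0, 1, 0]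

@[simp] lemma cons_val_five {α : Type*} {m : ℕ} (x : α)
    (u : Fin (m + 5) → α) :
    Matrix.vecCons x u 5 =
      Matrix.vecHead (Matrix.vecTail (Matrix.vecTail (Matrix.vecTail (Matrix.vecTail u)))) :=
  rfl

@[simp] lemma cons_val_six {α : Type*} {m : ℕ} (x : α)
    (u : Fin (m + 6) → α) :
    Matrix.vecCons x u 6 =
      Matrix.vecHead (Matrix.vecTail (Matrix.vecTail (Matrix.vecTail (Matrix.vecTail (Matrix.vecTail u))))) :=
  rfl

lemma cval5 {α : Type*} (a b c d e f g : α) : ![a,b,c,d,e,f,g] 5 = f := rfl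
lemma cval6 {α : Type*} (a b c d e f g : α) : ![a,b,c,d,e,f,g] 6 = g := rfl

/-- The mod-2 functional `g = (1,0,0,0,0,1,1)` kills the columns of `AYMatrix` mod 2. -/
lemma g_vecMul : Matrix.vecMul ![1,0,0,0,0,1,1] AYMatrix = ![0,0,0,2,2,0,0] := by decide

/-- The left-kernel vector `u = (0,-1,0,0,1,0,1)`. -/
lemma u_vecMul : Matrix.vecMul ![0,-1,0,0,1,0,1] AYMatrix = 0 := by decide

lemma two_eSix_mem : (2 • eSix) ∈ LinearMap.range AYMatrix.mulVecLin := by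
  refine ⟨![1,0,1,0,1,0,-1], ?_⟩
  rw [Matrix.mulVecLin_apply]
  funext i
  fin_cases i <;>
    simp [AYMatrix, eSix, Matrix.mulVec, dotProduct, Fin.sum_univ_seven,
      cons_val_five, cons_val_six]

lemma eSix_notMem : eSix ∉ LinearMap.range AYMatrix.mulVecLin := by
  rintro ⟨x, hx⟩
  rw [Matrix.mulVecLin_apply] at hx
  have h := congrArg (fun w => dotProduct ![1,0,0,0,0,1,1] w) hx
  simp only [Matrix.dotProduct_mulVec, g_vecMul] at h
  simp [dotProduct, Fin.sum_univ_seven, eSix, cons_val_five, cons_val_six] at h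
  omega

/-- `2·e₆` lies in the ℤ-span of the columns of `AYMatrix` but `e₆` does not; hence the
class of `e₆` (the homology class `F`) has order exactly 2 in the cokernel
`ℤ⁷ / im(M)`, and it generates the torsion subgroup of the cokernel. -/
theorem eSix_torsion :
    (2 • eSix ∈ LinearMap.range AYMatrix.mulVecLin) ∧
    eSix ∉ LinearMap.range AYMatrix.mulVecLin ∧
    addOrderOf
      (Submodule.Quotient.mk eSix :
        (Fin 7 → ℤ) ⧸ LinearMap.range AYMatrix.mulVecLin) = 2 ∧
    (∀ x : (Fin 7 → ℤ) ⧸ LinearMap.range AYMatrix.mulVecLin,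
      IsOfFinAddOrder x → ∃ n : ℤ, x = n • (Submodule.Quotient.mk eSix :
        (Fin 7 → ℤ) ⧸ LinearMap.range AYMatrix.mulVecLin)) := by
  set R := LinearMap.range AYMatrix.mulVecLin with hR
  refine ⟨two_eSix_mem, eSix_notMem, ?_, ?_⟩
  · -- order 2
    have hq2 : (2 : ℕ) • (Submodule.Quotient.mk eSix : (Fin 7 → ℤ) ⧸ R) = 0 := by
      have : ((2 : ℕ) • (Submodule.Quotient.mk eSix : (Fin 7 → ℤ) ⧸ R))
          = Submodule.Quotient.mk (2 • eSix) := by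
        rw [two_smul, two_smul]
        rfl
      rw [this, Submodule.Quotient.mk_eq_zero]
      exact two_eSix_mem
    have hqne : (Submodule.Quotient.mk eSix : (Fin 7 → ℤ) ⧸ R) ≠ 0 := by
      rw [Ne, Submodule.Quotient.mk_eq_zero]
      exact eSix_notMem
    exact addOrderOf_eq_prime hq2 hqne
  · -- torsion is generated by [eSix]
    intro x hx
    obtain ⟨v, rfl⟩ := Submodule.Quotient.mk_surjective R x
    obtain ⟨k, hk0, hk⟩ := hx.exists_nsmul_eq_zero
    -- k • v ∈ R
    have hkv : (k : ℤ) • v ∈ R := by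
      rw [← Submodule.Quotient.mk_eq_zero, Submodule.Quotient.mk_smul,
        natCast_zsmul]
      exact hk
    obtain ⟨y, hy⟩ := hkv
    rw [Matrix.mulVecLin_apply] at hy
    -- apply the left-kernel functional u
    have hu := congrArg (fun w => dotProduct ![0,-1,0,0,1,0,1] w) hy
    simp only [Matrix.dotProduct_mulVec, u_vecMul, zero_dotProduct,
      dotProduct_smul] at hu
    simp [dotProduct, Fin.sum_univ_seven, cons_val_five, cons_val_six, smul_eq_mul] at hu
    have hrel : v 6 = v 1 - v 4 := by
      rcases hu with h | h
      · omega
      · omega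
    -- explicit witness
    refine ⟨v 0 + v 1 + v 4 + v 5, ?_⟩
    rw [← Submodule.Quotient.mk_smul, Submodule.Quotient.eq]
    refine ⟨![-(v 0) - v 4, v 3, 0, 0, -(v 4), v 1 + v 3, v 0 + v 2 + 2 * v 4], ?_⟩
    rw [Matrix.mulVecLin_apply]
    funext i
    fin_cases i <;>
      simp [AYMatrix, eSix, Matrix.mulVec, dotProduct, Fin.sum_univ_seven,
        cons_val_five, cons_val_six, hrel] <;>
      ring
end

section
/- Every additive group homomorphism φ : ℤ⁷ → ℤ that vanishes on the ℤ-span of the columns of M satisfies φ(e₁) = φ(e₃) = φ(e₄) = φ(e₆) = 0, φ(e₅) = φ(e₇), and φ(e₂) = −φ(e₇). (This computes the torsion-free quotient homomorphism ψ_Q on the homology classes A, …, G: the generator ν of the free part of the cokernel is the image of G, the classes A, C, D, F map to 0, E maps to ν, and B maps to ν⁻¹.) -/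
/-- Any additive homomorphism `φ : ℤ⁷ → ℤ` vanishing on the ℤ-span of the columns of
`AYMatrix` kills `e₁, e₃, e₄, e₆` and satisfies `φ(e₅) = φ(e₇)`, `φ(e₂) = −φ(e₇)`.
(This computes the torsion-free quotient map `ψ_Q` on the classes A,…,G.) -/
theorem torsion_free_quotient_values :
    ∀ φ : (Fin 7 → ℤ) →+ ℤ,
      (∀ v ∈ LinearMap.range AYMatrix.mulVecLin, φ v = 0) →
      φ (Pi.single 0 1) = 0 ∧
      φ (Pi.single 2 1) = 0 ∧
      φ (Pi.single 3 1) = 0 ∧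
      φ (Pi.single 5 1) = 0 ∧
      φ (Pi.single 4 1) = φ (Pi.single 6 1) ∧
      φ (Pi.single 1 1) = -φ (Pi.single 6 1) := by
  intro φ h
  set a : Fin 7 → ℤ := fun i => φ (Pi.single i 1) with ha
  have key : ∀ j : Fin 7, ∑ i : Fin 7, AYMatrix i j * a i = 0 := by
    intro j
    have h1 : φ (AYMatrix.mulVec (Pi.single j 1)) = 0 :=
      h _ ⟨Pi.single j 1, by simp [Matrix.mulVecLin_apply]⟩
    have h2 : AYMatrix.mulVec (Pi.single j 1) =
        ∑ i : Fin 7, (AYMatrix i j) • (Pi.single i 1 : Fin 7 → ℤ) := by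
      funext k
      simp [Matrix.mulVec_single, Finset.sum_apply, Pi.single_apply, mul_comm]
    rw [h2, map_sum] at h1
    simp only [map_zsmul, smul_eq_mul] at h1
    exact h1
  have k0 : (-1) * a 0 + (0) * a 1 + (1) * a 2 + (0) * a 3 + (0) * a 4 + (1) * a 5 + (0) * a 6 = 0 := by
    have := key 0; rw [Fin.sum_univ_seven] at this; exact this
  have k1 : (0) * a 0 + (-1) * a 1 + (0) * a 2 + (1) * a 3 + (0) * a 4 + (1) * a 5 + (-1) * a 6 = 0 := by
    have := key 1; rw [Fin.sum_univ_seven] at this; exact this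
  have k2 : (0) * a 0 + (0) * a 1 + (-1) * a 2 + (0) * a 3 + (1) * a 4 + (1) * a 5 + (-1) * a 6 = 0 := by
    have := key 2; rw [Fin.sum_univ_seven] at this; exact this
  have k3 : (0) * a 0 + (0) * a 1 + (1) * a 2 + (-1) * a 3 + (0) * a 4 + (2) * a 5 + (0) * a 6 = 0 := by
    have := key 3; rw [Fin.sum_univ_seven] at this; exact this
  have k4 : (1) * a 0 + (0) * a 1 + (1) * a 2 + (0) * a 3 + (-1) * a 4 + (0) * a 5 + (1) * a 6 = 0 := by
    have := key 4; rw [Fin.sum_univ_seven] at this; exact this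
  have k5 : (0) * a 0 + (1) * a 1 + (0) * a 2 + (0) * a 3 + (0) * a 4 + (-1) * a 5 + (1) * a 6 = 0 := by
    have := key 5; rw [Fin.sum_univ_seven] at this; exact this
  have k6 : (0) * a 0 + (0) * a 1 + (1) * a 2 + (0) * a 3 + (0) * a 4 + (0) * a 5 + (0) * a 6 = 0 := by
    have := key 6; rw [Fin.sum_univ_seven] at this; exact this
  have g0 : φ (Pi.single 0 1) = a 0 := rfl
  have g1 : φ (Pi.single 1 1) = a 1 := rfl
  have g2 : φ (Pi.single 2 1) = a 2 := rfl
  have g3 : φ (Pi.single 3 1) = a 3 := rfl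
  have g4 : φ (Pi.single 4 1) = a 4 := rfl
  have g5 : φ (Pi.single 5 1) = a 5 := rfl
  have g6 : φ (Pi.single 6 1) = a 6 := rfl
  rw [g0, g1, g2, g3, g4, g5, g6]
  refine ⟨?_, ?_, ?_, ?_, ?_, ?_⟩ <;> omega
end

section
/- Let α be the unique real root of x³ + x² + x − 1 (so 1/2 < α < 1), and let x₀ = ((α − α²)/(2(1 + α²)), α/(1 − α²)) ∈ ℝ². Then: (i) 0 ≤ (x₀)₁ ≤ (α + α²)/2 and α < (x₀)₂ ≤ 1 (so x₀ lies in region R₃); (ii) the point x₁ = (α·(x₀)₁ + α, (x₀)₂/α − 1) satisfies (α + α²)/2 < (x₁)₁ ≤ 1 and 0 ≤ (x₁)₂ ≤ α (so x₁ lies in region R₁); (iii) (α·(x₁)₁ − (α − α⁴)/2, (x₁)₂/α) = x₀; and (iv) x₁ ≠ x₀. Hence x₀ is a point of period exactly two for the piecewise-affine Arnoux–Yoccoz map h. -/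
/-- Let `α` be the unique real root of `x³ + x² + x − 1`, and let
`x₀ = ((α − α²)/(2(1 + α²)), α/(1 − α²))`.  Then `x₀` lies in region `R₃`, its image
`x₁ = (α·(x₀)₁ + α, (x₀)₂/α − 1)` under the branch of `h` on `R₃` lies in region `R₁`,
the branch of `h` on `R₁` carries `x₁` back to `x₀`, and `x₁ ≠ x₀`.  Hence `x₀` is a
point of period exactly two for the Arnoux–Yoccoz map `h`. -/
theorem period_two_point :
    ∀ α : ℝ, α ^ 3 + α ^ 2 + α - 1 = 0 →
      (0 ≤ (α - α ^ 2) / (2 * (1 + α ^ 2)) ∧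
        (α - α ^ 2) / (2 * (1 + α ^ 2)) ≤ (α + α ^ 2) / 2 ∧
        α < α / (1 - α ^ 2) ∧ α / (1 - α ^ 2) ≤ 1) ∧
      ((α + α ^ 2) / 2 < α * ((α - α ^ 2) / (2 * (1 + α ^ 2))) + α ∧
        α * ((α - α ^ 2) / (2 * (1 + α ^ 2))) + α ≤ 1 ∧
        0 ≤ α / (1 - α ^ 2) / α - 1 ∧ α / (1 - α ^ 2) / α - 1 ≤ α) ∧
      (α * (α * ((α - α ^ 2) / (2 * (1 + α ^ 2))) + α) - (α - α ^ 4) / 2 =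
          (α - α ^ 2) / (2 * (1 + α ^ 2)) ∧
        (α / (1 - α ^ 2) / α - 1) / α = α / (1 - α ^ 2)) ∧
      ((α * ((α - α ^ 2) / (2 * (1 + α ^ 2))) + α, α / (1 - α ^ 2) / α - 1) ≠
        ((α - α ^ 2) / (2 * (1 + α ^ 2)), α / (1 - α ^ 2))) := by
  intro α h
  have h1 : (1:ℝ)/2 < α := by nlinarith [sq_nonneg (α - 1/2), sq_nonneg (α + 1), sq_nonneg α]
  have h2 : α < 1 := by nlinarith [sq_nonneg (α - 1), sq_nonneg (α + 1)]
  have hpos : (0:ℝ) < α := by linarith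
  have hne : α ≠ 0 := ne_of_gt hpos
  have hd1 : (0:ℝ) < 1 + α ^ 2 := by positivity
  have hd2 : (0:ℝ) < 1 - α ^ 2 := by nlinarith
  have hd1' : (1 + α ^ 2) ≠ 0 := ne_of_gt hd1
  have hd2' : (1 - α ^ 2) ≠ 0 := ne_of_gt hd2
  have e7 : α / (1 - α ^ 2) / α = 1 / (1 - α ^ 2) := by field_simp
  have e5 : α * ((α - α ^ 2) / (2 * (1 + α ^ 2))) + α
      = (α * (α - α ^ 2) + 2 * α * (1 + α ^ 2)) / (2 * (1 + α ^ 2)) := by field_simp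
  refine ⟨⟨?_, ?_, ?_, ?_⟩, ⟨?_, ?_, ?_, ?_⟩, ⟨?_, ?_⟩, ?_⟩
  · apply div_nonneg; nlinarith; positivity
  · rw [div_le_div_iff₀ (by positivity) two_pos]; nlinarith
  · rw [lt_div_iff₀ hd2]; nlinarith
  · rw [div_le_one hd2]; nlinarith
  · rw [e5, div_lt_div_iff₀ two_pos (by positivity)]; nlinarith
  · rw [e5, div_le_one (by positivity)]; nlinarith
  · rw [e7, sub_nonneg, le_div_iff₀ hd2]; nlinarith
  · rw [e7, sub_le_iff_le_add, div_le_iff₀ hd2]; nlinarith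
  · field_simp
    linear_combination ((2) * α ^ 0 + (-1) * α ^ 1 + (1) * α ^ 2) * h
  · field_simp; ring
  · intro hc
    have h2c := congrArg Prod.snd hc
    simp only [Prod.snd] at h2c
    rw [e7] at h2c
    field_simp at h2c
    nlinarith [h2c]
end

section
/- For every integer g with 4 ≤ g ≤ 10 and every integer b with 1 ≤ b ≤ g − 1, the polynomial X^g − X^{g−1} − X^{g−2} − ⋯ − X − 1 does NOT divide the polynomial X^{2g} − X^{g+b} − 4·X^{g} − X^{g−b} + 1 in ℤ[X]. (Hence for 4 ≤ g ≤ 10 the genus-g Arnoux–Yoccoz pseudo-Anosov map, whose stretch factor is the largest root of X^g − Σ_{i=0}^{g−1} X^i, cannot arise by blowing down a cross section of the mapping torus of the blown-up genus-3 Arnoux–Yoccoz map.) -/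
open Polynomial Finset

/-- For every `4 ≤ g ≤ 10` and `1 ≤ b ≤ g − 1`, the minimal polynomial
`X^g − X^{g−1} − ⋯ − X − 1` of the genus-`g` Arnoux–Yoccoz stretch factor does not
divide the specialization `X^{2g} − X^{g+b} − 4X^g − X^{g−b} + 1` in `ℤ[X]`.
Hence for `4 ≤ g ≤ 10` the genus-`g` Arnoux–Yoccoz pseudo-Anosov map cannot arise by
blowing down a cross section of the mapping torus of the blown-up genus-3
Arnoux–Yoccoz map. -/
theorem higher_genus_excluded :
    ∀ g b : ℕ, 4 ≤ g → g ≤ 10 → 1 ≤ b → b ≤ g - 1 →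
      ¬ ((X ^ g - ∑ i ∈ Finset.range g, X ^ i : Polynomial ℤ) ∣
          (X ^ (2 * g) - X ^ (g + b) - 4 * X ^ g - X ^ (g - b) + 1 : Polynomial ℤ)) := by
  intro g b hg4 hg10 hb1 hb h
  have h3 := Polynomial.eval_dvd (x := (3 : ℤ)) h
  simp only [map_sub, map_add, map_sum, map_pow, map_mul, map_one,
    Polynomial.coe_evalRingHom, Polynomial.eval_X, Polynomial.eval_pow,
    Polynomial.eval_ofNat, Polynomial.eval_sub, Polynomial.eval_add, Polynomial.eval_mul,
    Polynomial.eval_one, Polynomial.eval_finset_sum] at h3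
  interval_cases g <;> interval_cases b <;>
    simp only [Finset.sum_range_succ, Finset.sum_range_zero] at h3 <;> norm_num at h3
end
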